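/- For every integer d ≥ 2, there exists a finite vertex set V and a system of m = ⌈log₂ log₂ d⌉ trees on V, each of maximum degree at most d, that has no cooperative coloring; consequently m_T(d) > log₂ log₂ d, where T is the class of trees. -/

import Mathlib

/-- A set of vertices is independent in the graph `G`:
no two of its vertices are adjacent. -/
def IndepIn {V : Type*} (G : SimpleGraph V) (I : Set V) : Prop :=
  ∀ ⦃u⦄, u ∈ I → ∀ ⦃v⦄, v ∈ I → ¬ G.Adj u v

/-- `(I j)` is a cooperative coloring for the system `G` of graphs:
each `I j` is independent in `G j` and the sets `I j` cover all vertices. -/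
def IsCoopColoring {V : Type*} {m : ℕ} (G : Fin m → SimpleGraph V)
    (I : Fin m → Set V) : Prop :=
  (∀ j, IndepIn (G j) (I j)) ∧ (⋃ j, I j) = Set.univ

/-- The system `G` of graphs has a cooperative coloring. -/
def HasCoopColoring {V : Type*} {m : ℕ} (G : Fin m → SimpleGraph V) : Prop :=
  ∃ I : Fin m → Set V, IsCoopColoring G I

/-- The maximum degree of a graph on a finite vertex set. -/
noncomputable def maxDeg {V : Type*} [Fintype V] (G : SimpleGraph V) : ℕ :=
  Finset.univ.sup fun v => (G.neighborSet v).ncard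

/-- Every system of `m` trees of maximum degree at most `d` on a common finite
vertex set has a cooperative coloring. -/
def TreesColorable (d m : ℕ) : Prop :=
  ∀ (V : Type) [Fintype V] (T : Fin m → SimpleGraph V),
    (∀ i, (T i).IsTree) → (∀ i, maxDeg (T i) ≤ d) → HasCoopColoring T

/-- `m_T(d)`: the least `m` such that every `m` trees of maximum degree at most
`d` on a common finite vertex set have a cooperative coloring. -/
noncomputable def mT (d : ℕ) : ℕ := sInf {m | TreesColorable d m}


open SimpleGraph

/-- Graph defined by a parent function. -/
def pgraph {V : Type*} (p : V → V) : SimpleGraph V where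
  Adj u v := u ≠ v ∧ (p u = v ∨ p v = u)
  symm := by
    constructor
    rintro u v ⟨h1, h2⟩
    exact ⟨h1.symm, h2.symm⟩
  loopless := ⟨fun v h => h.1 rfl⟩

lemma pgraph_adj {V : Type*} (p : V → V) (u v : V) :
    (pgraph p).Adj u v ↔ u ≠ v ∧ (p u = v ∨ p v = u) := Iff.rfl

section PTree

variable {V : Type*} (p : V → V) (root : V) (hgt : V → ℕ)
  (hroot : p root = root) (hdec : ∀ v, v ≠ root → hgt (p v) < hgt v)

include hdec in
lemma pgraph_ne_parent {v : V} (hv : v ≠ root) : v ≠ p v := by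
  intro h
  have := hdec v hv
  rw [← h] at this
  omega

include hroot hdec in
lemma pgraph_iter_hgt_le : ∀ (n : ℕ) (v : V), hgt (p^[n] v) ≤ hgt v := by
  intro n
  induction n with
  | zero => simp
  | succ n ih =>
    intro v
    rw [Function.iterate_succ_apply]
    refine (ih (p v)).trans ?_
    by_cases hv : v = root
    · subst hv; rw [hroot]
    · exact (hdec v hv).le

include hroot hdec in
lemma pgraph_reach_root : ∀ v : V, (pgraph p).Reachable v root := by
  have key : ∀ (n : ℕ) (v : V), hgt v ≤ n → (pgraph p).Reachable v root := by
    intro n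
    induction n with
    | zero =>
      intro v hv
      by_cases h : v = root
      · subst h; exact Reachable.refl _
      · exact absurd (hdec v h) (by omega)
    | succ n ih =>
      intro v hv
      by_cases h : v = root
      · subst h; exact Reachable.refl _
      · have hadj : (pgraph p).Adj v (p v) :=
          ⟨pgraph_ne_parent p root hgt hdec h, Or.inl rfl⟩
        exact hadj.reachable.trans (ih (p v) (by have := hdec v h; omega))
  exact fun v => key (hgt v) v le_rfl

/-- the set of vertices through which the ancestor chain of `v` passes. -/
def pside (c : V) (v : V) : Prop := ∃ n : ℕ, p^[n] v = c

include hroot hdec in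
lemma pgraph_isTree : (pgraph p).IsTree := by
  constructor
  · have : Nonempty V := ⟨root⟩
    exact Connected.mk (fun u v =>
      (pgraph_reach_root p root hgt hroot hdec u).trans
        (pgraph_reach_root p root hgt hroot hdec v).symm)
  · rw [isAcyclic_iff_forall_adj_isBridge]
    intro v w hadj
    -- WLOG p-structure: one of them is parent of the other
    -- we handle both orientations by a helper
    suffices H : ∀ x y : V, (pgraph p).Adj x y → p x = y → (pgraph p).IsBridge s(x, y) by
      rcases hadj.2 with h | h
      · exact H v w hadj h
      · rw [Sym2.eq_swap]; exact H w v hadj.symm h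
    intro c q hadj hpc
    subst hpc
    rw [isBridge_iff_adj_and_forall_walk_mem_edges]
    have hcroot : c ≠ root := by
      intro h; subst h; rw [hroot] at hadj; exact hadj.1 rfl
    -- side invariance
    have hside_edge : ∀ x y : V, (pgraph p).Adj x y → s(x, y) ≠ s(c, p c) →
        (pside p c x ↔ pside p c y) := by
      have key : ∀ x : V, x ≠ c → (pside p c x ↔ pside p c (p x)) := by
        intro x hx
        constructor
        · rintro ⟨n, hn⟩
          rcases n with _ | n
          · simp only [Function.iterate_zero, id_eq] at hn
            exact absurd hn hx
          · exact ⟨n, by rwa [Function.iterate_succ_apply] at hn⟩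
        · rintro ⟨n, hn⟩
          exact ⟨n + 1, by rwa [Function.iterate_succ_apply]⟩
      intro x y hxy hne
      rcases hxy.2 with h | h
      · have hx : x ≠ c := by
          intro hh; subst hh; rw [h] at hne; exact hne rfl
        rw [key x hx, h]
      · have hy : y ≠ c := by
          intro hh; subst hh; rw [h] at hne; rw [Sym2.eq_swap] at hne; exact hne rfl
        rw [key y hy, h]
    -- any walk preserves side if it avoids the edge
    have hwalk : ∀ (x y : V) (w : (pgraph p).Walk x y), s(c, p c) ∉ w.edges →
        (pside p c x ↔ pside p c y) := by
      intro x y w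
      induction w with
      | nil => intro _; rfl
      | cons h q ih =>
        intro hne
        simp only [SimpleGraph.Walk.edges_cons, List.mem_cons, not_or] at hne
        rw [hside_edge _ _ h (fun hh => hne.1 hh.symm)]
        exact ih hne.2
    intro w
    by_contra hmem
    have := hwalk c (p c) w hmem
    have hc : pside p c c := ⟨0, rfl⟩
    have hpc : ¬ pside p c (p c) := by
      rintro ⟨n, hn⟩
      have h1 : hgt (p^[n] (p c)) ≤ hgt (p c) := pgraph_iter_hgt_le p root hgt hroot hdec n (p c)
      rw [hn] at h1
      have := hdec c hcroot
      omega
    exact hpc (this.mp hc)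

include hdec in
lemma pgraph_neighborSet_subset (v : V) :
    (pgraph p).neighborSet v ⊆ insert (p v) {u | p u = v} := by
  intro u hu
  simp only [Set.mem_insert_iff, Set.mem_setOf_eq]
  rcases hu.2 with h | h
  · exact Or.inl h.symm
  · exact Or.inr h

end PTree

section LLL

variable {V : Type} [Fintype V] [DecidableEq V] {m : ℕ}

open Finset

/-- colorings avoiding all bad events in `S` -/
noncomputable def Av (S : Finset (V × V × Fin m)) : Finset (V → Fin m) :=
  Finset.univ.filter fun f => ∀ e ∈ S, ¬(f e.1 = e.2.2 ∧ f e.2.1 = e.2.2)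

lemma mem_Av {S : Finset (V × V × Fin m)} {f : V → Fin m} :
    f ∈ Av S ↔ ∀ e ∈ S, ¬(f e.1 = e.2.2 ∧ f e.2.1 = e.2.2) := by
  classical
  simp [Av]

lemma Av_anti {S S' : Finset (V × V × Fin m)} (h : S ⊆ S') : Av S' ⊆ Av S := by
  intro f hf
  rw [mem_Av] at hf ⊢
  exact fun e he => hf e (h he)

/-- colorings avoiding `S` but hitting the bad event `e` -/
noncomputable def Hit (e : V × V × Fin m) (S : Finset (V × V × Fin m)) :
    Finset (V → Fin m) :=
  (Av S).filter fun f => f e.1 = e.2.2 ∧ f e.2.1 = e.2.2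

lemma mem_Hit {e : V × V × Fin m} {S : Finset (V × V × Fin m)} {f : V → Fin m} :
    f ∈ Hit e S ↔ f ∈ Av S ∧ (f e.1 = e.2.2 ∧ f e.2.1 = e.2.2) := by
  classical
  simp [Hit]

lemma Hit_subset (e : V × V × Fin m) (S : Finset (V × V × Fin m)) : Hit e S ⊆ Av S := by
  intro f hf; exact (mem_Hit.1 hf).1

lemma Av_insert (e : V × V × Fin m) (S : Finset (V × V × Fin m)) :
    Av (insert e S) = Av S \ Hit e S := by
  classical
  ext f
  simp only [mem_Av, Finset.mem_insert, Finset.mem_sdiff, mem_Hit, mem_Av]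
  constructor
  · intro h
    refine ⟨fun a ha => h a (Or.inr ha), ?_⟩
    intro ⟨_, hh⟩
    exact h e (Or.inl rfl) hh
  · rintro ⟨h1, h2⟩ a (rfl | ha)
    · intro hh; exact h2 ⟨h1, hh⟩
    · exact h1 a ha

lemma Av_card_split (e : V × V × Fin m) (S : Finset (V × V × Fin m)) :
    (Av (insert e S)).card + (Hit e S).card = (Av S).card := by
  classical
  rw [Av_insert]
  exact Finset.card_sdiff_add_card_eq_card (Hit_subset e S)

lemma update2_ne {u v z : V} (huz : z ≠ u) (hvz : z ≠ v) (f : V → Fin m) (x y : Fin m) :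
    Function.update (Function.update f u x) v y z = f z := by
  rw [Function.update_of_ne hvz, Function.update_of_ne huz]

/-- the product/independence step of the local lemma -/
lemma hit_count (u v : V) (j : Fin m) (huv : u ≠ v) (S₁ : Finset (V × V × Fin m))
    (hd : ∀ a ∈ S₁, a.1 ≠ u ∧ a.1 ≠ v ∧ a.2.1 ≠ u ∧ a.2.1 ≠ v) :
    (Hit (u, v, j) S₁).card * (m * m) = (Av S₁).card := by
  classical
  have hcard : ((Hit (u, v, j) S₁) ×ˢ (Finset.univ : Finset (Fin m × Fin m))).card
      = (Hit (u, v, j) S₁).card * (m * m) := by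
    rw [Finset.card_product, Finset.card_univ, Fintype.card_prod, Fintype.card_fin]
  rw [← hcard]
  refine Finset.card_bij'
    (fun fp _ => Function.update (Function.update fp.1 u fp.2.1) v fp.2.2)
    (fun g _ => (Function.update (Function.update g u j) v j, (g u, g v)))
    ?_ ?_ ?_ ?_
  · -- forward membership
    rintro ⟨f, x, y⟩ hf
    simp only [Finset.mem_product] at hf
    have hf1 := (mem_Hit.1 hf.1).1
    rw [mem_Av] at hf1 ⊢
    intro a ha
    obtain ⟨h1, h2, h3, h4⟩ := hd a ha
    dsimp only
    rw [update2_ne h1 h2, update2_ne h3 h4]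
    exact hf1 a ha
  · -- backward membership
    intro g hg
    simp only [Finset.mem_product, Finset.mem_univ, and_true]
    rw [mem_Hit]
    constructor
    · rw [mem_Av] at hg ⊢
      intro a ha
      obtain ⟨h1, h2, h3, h4⟩ := hd a ha
      rw [update2_ne h1 h2, update2_ne h3 h4]
      exact hg a ha
    · constructor
      · show Function.update (Function.update g u j) v j u = j
        rw [Function.update_of_ne huv, Function.update_self]
      · show Function.update (Function.update g u j) v j v = j
        rw [Function.update_self]
  · -- left inverse
    rintro ⟨f, x, y⟩ hf
    simp only [Finset.mem_product] at hf
    obtain ⟨-, hfu, hfv⟩ := mem_Hit.1 hf.1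
    have h1 : Function.update (Function.update f u x) v y u = x := by
      rw [Function.update_of_ne huv, Function.update_self]
    have h2 : Function.update (Function.update f u x) v y v = y := by
      rw [Function.update_self]
    simp only [Prod.mk.injEq]
    refine ⟨?_, h1, h2⟩
    funext z
    by_cases hzv : z = v
    · subst hzv; rw [Function.update_self]; exact hfv.symm
    · rw [Function.update_of_ne hzv]
      by_cases hzu : z = u
      · subst hzu; rw [Function.update_self]; exact hfu.symm
      · rw [Function.update_of_ne hzu, update2_ne hzu hzv]
  · -- right inverse
    intro g hg
    dsimp only
    funext z
    by_cases hzv : z = v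
    · subst hzv; rw [Function.update_self]
    · rw [Function.update_of_ne hzv]
      by_cases hzu : z = u
      · subst hzu; rw [Function.update_self]
      · rw [Function.update_of_ne hzu, update2_ne hzu hzv]


variable (T : Fin m → SimpleGraph V) (d : ℕ)

/-- the set of all bad events -/
noncomputable def Evts : Finset (V × V × Fin m) :=
  have := Classical.dec
  Finset.univ.filter fun e => (T e.2.2).Adj e.1 e.2.1

lemma mem_Evts {e : V × V × Fin m} : e ∈ Evts T ↔ (T e.2.2).Adj e.1 e.2.1 := by
  classical
  simp [Evts]

lemma deg_bound (hT : ∀ j, maxDeg (T j) ≤ d) (w : V) (j : Fin m) :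
    ((T j).neighborSet w).ncard ≤ d :=
  le_trans (Finset.le_sup (f := fun v => ((T j).neighborSet v).ncard) (Finset.mem_univ w)) (hT j)

lemma count_fst (hT : ∀ j, maxDeg (T j) ≤ d) (w : V) :
    ((Evts T).filter fun a => a.1 = w).card ≤ m * d := by
  classical
  set B : Finset (Fin m × V) :=
    Finset.univ.biUnion (fun j => ((T j).neighborSet w).toFinset.image fun b => (j, b)) with hB
  have hmap : ∀ a ∈ (Evts T).filter fun a => a.1 = w, (a.2.2, a.2.1) ∈ B := by
    rintro ⟨a1, a2, a3⟩ ha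
    simp only [Finset.mem_filter, mem_Evts] at ha
    obtain ⟨hadj, rfl⟩ := ha
    simp only [hB, Finset.mem_biUnion, Finset.mem_univ, true_and, Finset.mem_image,
      Set.mem_toFinset, SimpleGraph.mem_neighborSet]
    exact ⟨a3, a2, hadj, rfl⟩
  have hinj : ∀ a ∈ (Evts T).filter (fun a => a.1 = w), ∀ b ∈ (Evts T).filter (fun a => a.1 = w),
      (a.2.2, a.2.1) = (b.2.2, b.2.1) → a = b := by
    rintro ⟨a1, a2, a3⟩ ha ⟨b1, b2, b3⟩ hb hab
    simp only [Finset.mem_filter] at ha hb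
    simp only [Prod.mk.injEq] at hab
    obtain ⟨h1, h2⟩ := hab
    simp [ha.2, hb.2, h1, h2]
  have h1 : ((Evts T).filter fun a => a.1 = w).card ≤ B.card :=
    Finset.card_le_card_of_injOn _ hmap hinj
  refine h1.trans ?_
  refine (Finset.card_biUnion_le).trans ?_
  have h2 : ∀ j : Fin m, (((T j).neighborSet w).toFinset.image fun b => (j, b)).card ≤ d := by
    intro j
    refine (Finset.card_image_le).trans ?_
    rw [← Set.ncard_eq_toFinset_card']
    exact deg_bound T d hT w j
  calc ∑ j : Fin m, (((T j).neighborSet w).toFinset.image fun b => (j, b)).card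
      ≤ ∑ _j : Fin m, d := Finset.sum_le_sum (fun j _ => h2 j)
    _ = m * d := by simp [Finset.sum_const, Finset.card_univ, mul_comm]

lemma count_snd (hT : ∀ j, maxDeg (T j) ≤ d) (w : V) :
    ((Evts T).filter fun a => a.2.1 = w).card ≤ m * d := by
  classical
  set B : Finset (Fin m × V) :=
    Finset.univ.biUnion (fun j => ((T j).neighborSet w).toFinset.image fun b => (j, b)) with hB
  have hmap : ∀ a ∈ (Evts T).filter fun a => a.2.1 = w, (a.2.2, a.1) ∈ B := by
    rintro ⟨a1, a2, a3⟩ ha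
    simp only [Finset.mem_filter, mem_Evts] at ha
    obtain ⟨hadj, rfl⟩ := ha
    simp only [hB, Finset.mem_biUnion, Finset.mem_univ, true_and, Finset.mem_image,
      Set.mem_toFinset, SimpleGraph.mem_neighborSet]
    exact ⟨a3, a1, hadj.symm, rfl⟩
  have hinj : ∀ a ∈ (Evts T).filter (fun a => a.2.1 = w),
      ∀ b ∈ (Evts T).filter (fun a => a.2.1 = w),
      (a.2.2, a.1) = (b.2.2, b.1) → a = b := by
    rintro ⟨a1, a2, a3⟩ ha ⟨b1, b2, b3⟩ hb hab
    simp only [Finset.mem_filter] at ha hb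
    simp only [Prod.mk.injEq] at hab
    obtain ⟨h1, h2⟩ := hab
    simp [ha.2, hb.2, h1, h2]
  have h1 : ((Evts T).filter fun a => a.2.1 = w).card ≤ B.card :=
    Finset.card_le_card_of_injOn _ hmap hinj
  refine h1.trans ?_
  refine (Finset.card_biUnion_le).trans ?_
  have h2 : ∀ j : Fin m, (((T j).neighborSet w).toFinset.image fun b => (j, b)).card ≤ d := by
    intro j
    refine (Finset.card_image_le).trans ?_
    rw [← Set.ncard_eq_toFinset_card']
    exact deg_bound T d hT w j
  calc ∑ j : Fin m, (((T j).neighborSet w).toFinset.image fun b => (j, b)).card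
      ≤ ∑ _j : Fin m, d := Finset.sum_le_sum (fun j _ => h2 j)
    _ = m * d := by simp [Finset.sum_const, Finset.card_univ, mul_comm]

lemma touch_bound (hT : ∀ j, maxDeg (T j) ≤ d) (u v : V) :
    ((Evts T).filter fun a => a.1 = u ∨ a.1 = v ∨ a.2.1 = u ∨ a.2.1 = v).card
      ≤ 4 * (m * d) := by
  classical
  have hsub : ((Evts T).filter fun a => a.1 = u ∨ a.1 = v ∨ a.2.1 = u ∨ a.2.1 = v)
      ⊆ (((Evts T).filter fun a => a.1 = u) ∪ ((Evts T).filter fun a => a.1 = v)) ∪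
        (((Evts T).filter fun a => a.2.1 = u) ∪ ((Evts T).filter fun a => a.2.1 = v)) := by
    intro a ha
    simp only [Finset.mem_filter, Finset.mem_union] at ha ⊢
    tauto
  refine (Finset.card_le_card hsub).trans ?_
  refine (Finset.card_union_le _ _).trans ?_
  have g1 := (Finset.card_union_le ((Evts T).filter fun a => a.1 = u)
    ((Evts T).filter fun a => a.1 = v))
  have g2 := (Finset.card_union_le ((Evts T).filter fun a => a.2.1 = u)
    ((Evts T).filter fun a => a.2.1 = v))
  have c1 := count_fst T d hT u
  have c2 := count_fst T d hT v
  have c3 := count_snd T d hT u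
  have c4 := count_snd T d hT v
  omega

end LLL

lemma pow_succ_le_three_mul (D : ℕ) (hD : 0 < D) : (D + 1) ^ D ≤ 3 * D ^ D := by
  have hDR : (0 : ℝ) < D := by exact_mod_cast hD
  have h1 : ((D : ℝ) + 1) ≤ D * Real.exp (1 / D) := by
    have := Real.add_one_le_exp (1 / (D : ℝ))
    have h2 : (D : ℝ) * (1 / D + 1) ≤ D * Real.exp (1 / D) :=
      mul_le_mul_of_nonneg_left this hDR.le
    rw [mul_add, mul_one_div, div_self hDR.ne'] at h2
    linarith
  have h3 : ((D : ℝ) + 1) ^ D ≤ (D * Real.exp (1 / D)) ^ D :=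
    pow_le_pow_left₀ (by positivity) h1 D
  have h4 : ((D : ℝ) * Real.exp (1 / D)) ^ D = D ^ D * Real.exp 1 := by
    rw [mul_pow, ← Real.exp_nat_mul]
    congr 2
    field_simp
  have h5 : ((D : ℝ) + 1) ^ D ≤ D ^ D * 3 := by
    refine h3.trans ?_
    rw [h4]
    have := Real.exp_one_lt_d9
    have h6 : Real.exp 1 ≤ 3 := by norm_num at this ⊢; linarith
    exact mul_le_mul_of_nonneg_left h6 (by positivity)
  have : ((D + 1 : ℕ) : ℝ) ^ D ≤ ((3 * D ^ D : ℕ) : ℝ) := by push_cast; linarith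
  exact_mod_cast this



section LLL2

open Finset

variable {V : Type} [Fintype V] [DecidableEq V] {m : ℕ}
variable (T : Fin m → SimpleGraph V) (d : ℕ)

lemma lll_main (hT : ∀ j, maxDeg (T j) ≤ d) (hD : 0 < 4 * (m * d))
    (hnum : 3 * (4 * (m * d) + 1) ≤ m * m) :
    ∀ S : Finset (V × V × Fin m), S ⊆ Evts T → ∀ e ∈ Evts T,
      4 * (m * d) * (Av S).card ≤ (4 * (m * d) + 1) * (Av (insert e S)).card := by
  classical
  intro S
  induction S using Finset.strongInduction with
  | _ S IH =>
    intro hSE e he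
    have hm0 : 0 < m := by
      rcases Nat.eq_zero_or_pos m with h | h
      · subst h; simp at hD
      · exact h
    set D := 4 * (m * d) with hDdef
    by_cases heS : e ∈ S
    · rw [Finset.insert_eq_self.2 heS]
      exact Nat.mul_le_mul_right _ (by omega)
    obtain ⟨u, v, j⟩ := e
    have hadj : (T j).Adj u v := (mem_Evts T).1 he
    have huv : u ≠ v := hadj.ne
    set S₂ := S.filter (fun a => a.1 = u ∨ a.1 = v ∨ a.2.1 = u ∨ a.2.1 = v) with hS2
    set S₁ := S \ S₂ with hS1
    have hS12 : S₁ ∪ S₂ = S := Finset.sdiff_union_of_subset (Finset.filter_subset _ _)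
    have hS1S : S₁ ⊆ S := Finset.sdiff_subset
    have hS1E : S₁ ⊆ Evts T := hS1S.trans hSE
    have hc2 : S₂.card ≤ D := by
      have hsub : S₂ ⊆ (Evts T).filter (fun a => a.1 = u ∨ a.1 = v ∨ a.2.1 = u ∨ a.2.1 = v) :=
        Finset.filter_subset_filter _ hSE
      exact (Finset.card_le_card hsub).trans (touch_bound T d hT u v)
    -- chain lemma
    have chain : ∀ T' : Finset (V × V × Fin m), T' ⊆ S₂ →
        (Av S₁).card * D ^ T'.card ≤ (Av (S₁ ∪ T')).card * (D + 1) ^ T'.card := by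
      intro T'
      induction T' using Finset.induction_on with
      | empty => intro _; simp
      | insert t T' ht ih =>
        intro hsub
        have htS2 : t ∈ S₂ := hsub (Finset.mem_insert_self _ _)
        have htS : t ∈ S := Finset.filter_subset _ _ htS2
        have htE : t ∈ Evts T := hSE htS
        have hT'sub : T' ⊆ S₂ := (Finset.insert_subset_iff.1 hsub).2
        have hUsub : S₁ ∪ T' ⊆ S :=
          Finset.union_subset hS1S (hT'sub.trans (Finset.filter_subset _ _))
        have htnotin : t ∉ S₁ ∪ T' := by
          simp only [Finset.mem_union, not_or]
          exact ⟨fun hc => (Finset.mem_sdiff.1 hc).2 htS2, ht⟩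
        have hproper : (S₁ ∪ T') ⊂ S :=
          (Finset.ssubset_iff_of_subset hUsub).2 ⟨t, htS, htnotin⟩
        have hstep := IH (S₁ ∪ T') hproper (hUsub.trans hSE) t htE
        calc (Av S₁).card * D ^ (insert t T').card
            = ((Av S₁).card * D ^ T'.card) * D := by
              rw [Finset.card_insert_of_notMem ht, pow_succ]; ring
          _ ≤ ((Av (S₁ ∪ T')).card * (D + 1) ^ T'.card) * D :=
              Nat.mul_le_mul_right _ (ih hT'sub)
          _ = (D * (Av (S₁ ∪ T')).card) * (D + 1) ^ T'.card := by ring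
          _ ≤ ((D + 1) * (Av (insert t (S₁ ∪ T'))).card) * (D + 1) ^ T'.card :=
              Nat.mul_le_mul_right _ hstep
          _ = (Av (S₁ ∪ insert t T')).card * (D + 1) ^ (insert t T').card := by
              rw [Finset.union_insert, Finset.card_insert_of_notMem ht, pow_succ]; ring
    -- counting
    have hhit : (Hit (u, v, j) S).card ≤ (Hit (u, v, j) S₁).card := by
      apply Finset.card_le_card
      intro f hf
      rw [mem_Hit] at hf ⊢
      exact ⟨Av_anti hS1S hf.1, hf.2⟩
    have hd1 : ∀ a ∈ S₁, a.1 ≠ u ∧ a.1 ≠ v ∧ a.2.1 ≠ u ∧ a.2.1 ≠ v := by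
      intro a ha
      have hmem := Finset.mem_sdiff.1 ha
      have hnp : ¬(a.1 = u ∨ a.1 = v ∨ a.2.1 = u ∨ a.2.1 = v) := by
        intro hp
        exact hmem.2 (Finset.mem_filter.2 ⟨hmem.1, hp⟩)
      push_neg at hnp
      exact hnp
    have hcount := hit_count u v j huv S₁ hd1
    have hkey : (D + 1) * (Hit (u, v, j) S).card ≤ (Av S).card := by
      have hchain := chain S₂ (le_refl _)
      rw [hS12] at hchain
      have hcle : S₂.card ≤ D := hc2
      have hpow1 : (D + 1) ^ S₂.card * (D + 1) ^ (D - S₂.card) = (D + 1) ^ D := by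
        rw [← pow_add]; congr 1; omega
      have hpowD : D ^ S₂.card * D ^ (D - S₂.card) = D ^ D := by
        rw [← pow_add]; congr 1; omega
      have h3 : (D + 1) ^ D ≤ 3 * D ^ D := pow_succ_le_three_mul D hD
      have big : ((D + 1) * (Hit (u, v, j) S).card) * ((m * m) * D ^ D)
          ≤ (Av S).card * ((m * m) * D ^ D) := by
        calc ((D + 1) * (Hit (u, v, j) S).card) * ((m * m) * D ^ D)
            ≤ ((D + 1) * (Hit (u, v, j) S₁).card) * ((m * m) * D ^ D) := by
              exact Nat.mul_le_mul_right _ (Nat.mul_le_mul_left _ hhit)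
          _ = (D + 1) * ((Hit (u, v, j) S₁).card * (m * m)) * D ^ D := by ring
          _ = (D + 1) * (Av S₁).card * D ^ D := by rw [hcount]
          _ = (D + 1) * ((Av S₁).card * D ^ S₂.card) * D ^ (D - S₂.card) := by
              rw [← hpowD]; ring
          _ ≤ (D + 1) * ((Av S).card * (D + 1) ^ S₂.card) * D ^ (D - S₂.card) := by
              exact Nat.mul_le_mul_right _ (Nat.mul_le_mul_left _ hchain)
          _ ≤ (D + 1) * ((Av S).card * (D + 1) ^ S₂.card) * (D + 1) ^ (D - S₂.card) := by
              exact Nat.mul_le_mul_left _ (Nat.pow_le_pow_left (by omega) _)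
          _ = (Av S).card * ((D + 1) * ((D + 1) ^ S₂.card * (D + 1) ^ (D - S₂.card))) := by
              ring
          _ = (Av S).card * ((D + 1) * (D + 1) ^ D) := by rw [hpow1]
          _ ≤ (Av S).card * ((D + 1) * (3 * D ^ D)) := by
              exact Nat.mul_le_mul_left _ (Nat.mul_le_mul_left _ h3)
          _ = (Av S).card * ((3 * (D + 1)) * D ^ D) := by ring
          _ ≤ (Av S).card * ((m * m) * D ^ D) := by
              exact Nat.mul_le_mul_left _ (Nat.mul_le_mul_right _ hnum)
      have hpos : 0 < (m * m) * D ^ D := by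
        have : 0 < D ^ D := Nat.pow_pos hD
        positivity
      exact Nat.le_of_mul_le_mul_right big hpos
    have hsplit := Av_card_split (u, v, j) S
    set X := (Av (insert (u, v, j) S)).card with hX
    set H := (Hit (u, v, j) S).card with hH
    set A := (Av S).card with hA
    have h7 : D * H + H ≤ X + H := by
      calc D * H + H = (D + 1) * H := by ring
        _ ≤ A := hkey
        _ = X + H := hsplit.symm
    have hDH : D * H ≤ X := Nat.le_of_add_le_add_right h7
    calc D * A = D * (X + H) := by rw [hsplit]
      _ = D * X + D * H := by ring
      _ ≤ D * X + X := Nat.add_le_add_left hDH _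
      _ = (D + 1) * X := by ring

lemma lll_pos (hT : ∀ j, maxDeg (T j) ≤ d) (hD : 0 < 4 * (m * d))
    (hnum : 3 * (4 * (m * d) + 1) ≤ m * m) :
    ∀ S : Finset (V × V × Fin m), S ⊆ Evts T → 0 < (Av S).card := by
  classical
  have hm0 : 0 < m := by
    rcases Nat.eq_zero_or_pos m with h | h
    · subst h; simp at hD
    · exact h
  intro S
  induction S using Finset.induction_on with
  | empty =>
    intro _
    have : (Av (∅ : Finset (V × V × Fin m))).card = Finset.univ.card (α := V → Fin m) := by
      congr 1
      ext f
      simp [mem_Av]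
    rw [this]
    have : Nonempty (V → Fin m) := ⟨fun _ => ⟨0, hm0⟩⟩
    exact Finset.card_pos.2 Finset.univ_nonempty
  | insert e S he ih =>
    intro hsub
    have heE : e ∈ Evts T := hsub (Finset.mem_insert_self _ _)
    have hSsub : S ⊆ Evts T := (Finset.insert_subset_iff.1 hsub).2
    have h0 := ih hSsub
    have hmain := lll_main T d hT hD hnum S hSsub e heE
    rcases Nat.eq_zero_or_pos (Av (insert e S)).card with h | h
    · rw [h, Nat.mul_zero] at hmain
      have hpos : 0 < 4 * (m * d) * (Av S).card := Nat.mul_pos hD h0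
      omega
    · exact h
end LLL2


theorem coop_of_many {V : Type} [Fintype V] {m d : ℕ} (hd : 0 < d) (hm : 0 < m)
    (hnum : 3 * (4 * (m * d) + 1) ≤ m * m)
    (G : Fin m → SimpleGraph V) (hG : ∀ j, maxDeg (G j) ≤ d) : HasCoopColoring G := by
  classical
  have hD : 0 < 4 * (m * d) := by positivity
  have hpos := lll_pos G d hG hD hnum (Evts G) (le_refl _)
  obtain ⟨f, hf⟩ := Finset.card_pos.1 hpos
  refine ⟨fun j => {v | f v = j}, fun j => ?_, ?_⟩
  · intro u hu v hv hadj
    have he : ((u, v, j) : V × V × Fin m) ∈ Evts G := (mem_Evts G).2 hadj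
    exact (mem_Av.1 hf) _ he ⟨hu, hv⟩
  · ext v
    simp only [Set.mem_iUnion, Set.mem_univ, iff_true]
    exact ⟨f v, rfl⟩

-- sizes and degree bounds
def Nn : ℕ → ℕ
  | 0 => 1
  | (m + 1) => Nn m + Nn m * Nn m

def Dd : ℕ → ℕ
  | 0 => 0
  | (m + 1) => Nn m + Dd m

lemma Nn_pos (m : ℕ) : 0 < Nn m := by
  induction m with
  | zero => simp [Nn]
  | succ m ih => simp only [Nn]; omega

/-- A gadget: a system of `m` trees (given by parent functions) on a common
finite vertex set, with a designated vertex `w` such that whenever independent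
sets of the trees cover everything except possibly `w`, they do not cover `w`. -/
structure Gad (m : ℕ) : Type 1 where
  V : Type
  fin : Fintype V
  p : Fin m → V → V
  hgt : Fin m → V → ℕ
  rt : Fin m → V
  hroot : ∀ k, p k (rt k) = rt k
  hdec : ∀ k v, v ≠ rt k → hgt k (p k v) < hgt k v
  w : V
  card_le : @Fintype.card V fin ≤ Nn m
  deg_le : ∀ k v, ((pgraph (p k)).neighborSet v).ncard ≤ Dd m
  key : ∀ I : Fin m → Set V, (∀ k, IndepIn (pgraph (p k)) (I k)) →
      (∀ v, v ≠ w → v ∈ ⋃ k, I k) → ∀ k, w ∉ I k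

/-- the one-tree gadget : a single edge -/
def gadOne : Gad 1 where
  V := Bool
  fin := inferInstance
  p := fun _ _ => false
  hgt := fun _ x => cond x 1 0
  rt := fun _ => false
  hroot := fun _ => rfl
  hdec := by
    intro k v hv
    cases v
    · exact absurd rfl hv
    · simp
  w := false
  card_le := by simp [Nn]
  deg_le := by
    intro k v
    have hsub : (pgraph (fun _ : Bool => false)).neighborSet v ⊆ {!v} := by
      intro u hu
      have h1 : u ≠ v := fun h => hu.1 (h.symm)
      cases u <;> cases v <;> simp_all
    refine le_trans (Set.ncard_le_ncard hsub (Set.finite_singleton _)) ?_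
    simp [Dd, Nn]
  key := by
    intro I hind hcov k
    intro hwI
    have htrue : true ∈ I k := by
      have := hcov true (by simp)
      rw [Set.mem_iUnion] at this
      obtain ⟨j, hj⟩ := this
      have : j = k := Subsingleton.elim _ _
      rwa [this] at hj
    have hadj : (pgraph (fun _ : Bool => false)).Adj false true := by
      refine ⟨by simp, Or.inr rfl⟩
    exact hind k hwI htrue hadj

namespace GadStep

variable {n : ℕ} (g : Gad (n + 1))

/-- new vertex set : hubs ⊕ (hub, copy-vertex) pairs -/
abbrev W (g : Gad (n + 1)) : Type := g.V ⊕ g.V × g.V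

/-- the new parent functions -/
noncomputable def np (k : Fin (n + 2)) : W g → W g :=
  Fin.lastCases
    (Sum.elim (fun h => Sum.inl (g.p 0 h)) (fun hc => Sum.inl hc.1))
    (fun k' => Sum.elim (fun h => Sum.inl (g.p k' h))
      (fun hc => @ite _ (hc.2 = g.rt k') (Classical.decEq g.V hc.2 (g.rt k'))
        (Sum.inl hc.1) (Sum.inr (hc.1, g.p k' hc.2))))
    k

noncomputable def nhgt (k : Fin (n + 2)) : W g → ℕ :=
  Fin.lastCases
    (Sum.elim (fun h => g.hgt 0 h) (fun hc => g.hgt 0 hc.1 + 1))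
    (fun k' => Sum.elim (fun h => g.hgt k' h)
      (fun hc => g.hgt k' hc.1 + 1 + g.hgt k' hc.2))
    k

noncomputable def nrt (k : Fin (n + 2)) : W g :=
  Fin.lastCases (Sum.inl (g.rt 0)) (fun k' => Sum.inl (g.rt k')) k

-- computation rules
lemma np_last_inl (a : g.V) : np g (Fin.last (n + 1)) (Sum.inl a) = Sum.inl (g.p 0 a) := by
  simp [np]

lemma np_last_inr (h c : g.V) : np g (Fin.last (n + 1)) (Sum.inr (h, c)) = Sum.inl h := by
  simp [np]

lemma np_cast_inl (k' : Fin (n + 1)) (a : g.V) :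
    np g k'.castSucc (Sum.inl a) = Sum.inl (g.p k' a) := by
  simp [np]

lemma np_cast_inr_rt (k' : Fin (n + 1)) (h : g.V) {c : g.V} (hc : c = g.rt k') :
    np g k'.castSucc (Sum.inr (h, c)) = Sum.inl h := by
  simp only [np, Fin.lastCases_castSucc, Sum.elim_inr]
  rw [if_pos hc]

lemma np_cast_inr (k' : Fin (n + 1)) (h : g.V) {c : g.V} (hc : c ≠ g.rt k') :
    np g k'.castSucc (Sum.inr (h, c)) = Sum.inr (h, g.p k' c) := by
  simp only [np, Fin.lastCases_castSucc, Sum.elim_inr]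
  rw [if_neg hc]

lemma nhgt_last_inl (a : g.V) : nhgt g (Fin.last (n + 1)) (Sum.inl a) = g.hgt 0 a := by
  simp [nhgt]

lemma nhgt_last_inr (h c : g.V) :
    nhgt g (Fin.last (n + 1)) (Sum.inr (h, c)) = g.hgt 0 h + 1 := by
  simp [nhgt]

lemma nhgt_cast_inl (k' : Fin (n + 1)) (a : g.V) :
    nhgt g k'.castSucc (Sum.inl a) = g.hgt k' a := by
  simp [nhgt]

lemma nhgt_cast_inr (k' : Fin (n + 1)) (h c : g.V) :
    nhgt g k'.castSucc (Sum.inr (h, c)) = g.hgt k' h + 1 + g.hgt k' c := by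
  simp [nhgt]

lemma nrt_last : nrt g (Fin.last (n + 1)) = Sum.inl (g.rt 0) := by simp [nrt]

lemma nrt_cast (k' : Fin (n + 1)) : nrt g k'.castSucc = Sum.inl (g.rt k') := by simp [nrt]

lemma nhroot : ∀ k, np g k (nrt g k) = nrt g k := by
  intro k
  induction k using Fin.lastCases with
  | last => rw [nrt_last, np_last_inl, g.hroot 0]
  | cast k' => rw [nrt_cast, np_cast_inl, g.hroot k']

lemma nhdec : ∀ k v, v ≠ nrt g k → nhgt g k (np g k v) < nhgt g k v := by
  intro k v hv
  induction k using Fin.lastCases with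
  | last =>
    rw [nrt_last] at hv
    cases v with
    | inl h =>
      have hne : h ≠ g.rt 0 := fun hh => hv (by rw [hh])
      rw [np_last_inl, nhgt_last_inl, nhgt_last_inl]
      exact g.hdec 0 h hne
    | inr hc =>
      obtain ⟨h, c⟩ := hc
      rw [np_last_inr, nhgt_last_inl, nhgt_last_inr]
      omega
  | cast k' =>
    rw [nrt_cast] at hv
    cases v with
    | inl h =>
      have hne : h ≠ g.rt k' := fun hh => hv (by rw [hh])
      rw [np_cast_inl, nhgt_cast_inl, nhgt_cast_inl]
      exact g.hdec k' h hne
    | inr hc =>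
      obtain ⟨h, c⟩ := hc
      by_cases hc2 : c = g.rt k'
      · rw [np_cast_inr_rt g k' h hc2, nhgt_cast_inl, nhgt_cast_inr]
        omega
      · rw [np_cast_inr g k' h hc2, nhgt_cast_inr, nhgt_cast_inr]
        have := g.hdec k' c hc2
        omega

-- adjacency transfer lemmas
lemma adj_copy {k' : Fin (n + 1)} {h c c' : g.V} (hadj : (pgraph (g.p k')).Adj c c') :
    (pgraph (np g k'.castSucc)).Adj (Sum.inr (h, c)) (Sum.inr (h, c')) := by
  obtain ⟨hne, hd⟩ := hadj
  refine ⟨by simpa using hne, ?_⟩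
  rcases hd with h1 | h1
  · have hcr : c ≠ g.rt k' := by
      intro hh
      rw [hh, g.hroot k'] at h1
      exact hne (hh.trans h1)
    left
    rw [np_cast_inr g k' h hcr, h1]
  · have hcr : c' ≠ g.rt k' := by
      intro hh
      rw [hh, g.hroot k'] at h1
      exact hne (h1.symm.trans hh.symm)
    right
    rw [np_cast_inr g k' h hcr, h1]

lemma adj_hub {k' : Fin (n + 1)} {a b : g.V} (hadj : (pgraph (g.p k')).Adj a b) :
    (pgraph (np g k'.castSucc)).Adj (Sum.inl a) (Sum.inl b) := by
  obtain ⟨hne, hd⟩ := hadj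
  refine ⟨by simpa using hne, ?_⟩
  rcases hd with h1 | h1
  · left; rw [np_cast_inl, h1]
  · right; rw [np_cast_inl, h1]

lemma adj_star (h c : g.V) :
    (pgraph (np g (Fin.last (n + 1)))).Adj (Sum.inl h) (Sum.inr (h, c)) := by
  refine ⟨by simp, Or.inr ?_⟩
  rw [np_last_inr]

-- neighborhood bounds
lemma nbr_cast_inl (k' : Fin (n + 1)) (a : g.V) :
    (pgraph (np g k'.castSucc)).neighborSet (Sum.inl a) ⊆
      (Sum.inl '' ((pgraph (g.p k')).neighborSet a)) ∪ {Sum.inr (a, g.rt k')} := by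
  intro u hu
  obtain ⟨hne, hd⟩ := hu
  cases u with
  | inl b =>
    left
    refine ⟨b, ⟨fun hh => hne (by rw [hh]), ?_⟩, rfl⟩
    rw [np_cast_inl] at hd
    rcases hd with h1 | h1
    · left; simpa using h1
    · rw [np_cast_inl] at h1; right; simpa using h1
  | inr hc =>
    obtain ⟨h, c⟩ := hc
    rcases hd with h1 | h1
    · rw [np_cast_inl] at h1; simp at h1
    · by_cases hc2 : c = g.rt k'
      · rw [np_cast_inr_rt g k' h hc2] at h1
        right
        have hha : h = a := by simpa using h1
        simp [hha, hc2]
      · rw [np_cast_inr g k' h hc2] at h1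
        simp at h1

lemma nbr_cast_inr (k' : Fin (n + 1)) (h c : g.V) :
    (pgraph (np g k'.castSucc)).neighborSet (Sum.inr (h, c)) ⊆
      ((fun x => Sum.inr (h, x)) '' ((pgraph (g.p k')).neighborSet c)) ∪ {Sum.inl h} := by
  intro u hu
  obtain ⟨hne, hd⟩ := hu
  cases u with
  | inl b =>
    right
    rcases hd with h1 | h1
    · by_cases hc2 : c = g.rt k'
      · rw [np_cast_inr_rt g k' h hc2] at h1
        have : h = b := by simpa using h1
        simp [this]
      · rw [np_cast_inr g k' h hc2] at h1
        simp at h1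
    · rw [np_cast_inl] at h1
      simp at h1
  | inr hc' =>
    obtain ⟨h', c'⟩ := hc'
    left
    rcases hd with h1 | h1
    · by_cases hc2 : c = g.rt k'
      · rw [np_cast_inr_rt g k' h hc2] at h1
        simp at h1
      · rw [np_cast_inr g k' h hc2] at h1
        simp only [Sum.inr.injEq, Prod.mk.injEq] at h1
        obtain ⟨hh1, hh2⟩ := h1
        refine ⟨c', ⟨?_, Or.inl hh2⟩, by rw [hh1]⟩
        intro hcc
        exact hne (by rw [hh1, hcc])
    · by_cases hc2 : c' = g.rt k'
      · rw [np_cast_inr_rt g k' h' hc2] at h1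
        simp at h1
      · rw [np_cast_inr g k' h' hc2] at h1
        simp only [Sum.inr.injEq, Prod.mk.injEq] at h1
        obtain ⟨hh1, hh2⟩ := h1
        refine ⟨c', ⟨?_, Or.inr hh2⟩, by rw [hh1]⟩
        intro hcc
        exact hne (by rw [← hh1, hcc])

lemma nbr_last_inl (a : g.V) :
    (pgraph (np g (Fin.last (n + 1)))).neighborSet (Sum.inl a) ⊆
      (Sum.inl '' ((pgraph (g.p 0)).neighborSet a)) ∪
        ((fun c => Sum.inr (a, c)) '' (Set.univ : Set g.V)) := by
  intro u hu
  obtain ⟨hne, hd⟩ := hu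
  cases u with
  | inl b =>
    left
    refine ⟨b, ⟨fun hh => hne (by rw [hh]), ?_⟩, rfl⟩
    rcases hd with h1 | h1
    · rw [np_last_inl] at h1; left; simpa using h1
    · rw [np_last_inl] at h1; right; simpa using h1
  | inr hc =>
    obtain ⟨h, c⟩ := hc
    rcases hd with h1 | h1
    · rw [np_last_inl] at h1; simp at h1
    · rw [np_last_inr] at h1
      have hha : h = a := by simpa using h1
      right
      exact ⟨c, trivial, by rw [hha]⟩

lemma nbr_last_inr (h c : g.V) :
    (pgraph (np g (Fin.last (n + 1)))).neighborSet (Sum.inr (h, c)) ⊆ {Sum.inl h} := by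
  intro u hu
  obtain ⟨hne, hd⟩ := hu
  cases u with
  | inl b =>
    rcases hd with h1 | h1
    · rw [np_last_inr] at h1
      have : h = b := by simpa using h1
      simp [this]
    · rw [np_last_inl] at h1; simp at h1
  | inr hc' =>
    obtain ⟨h', c'⟩ := hc'
    rcases hd with h1 | h1
    · rw [np_last_inr] at h1; simp at h1
    · rw [np_last_inr] at h1; simp at h1

/-- the recursive step: from a gadget with `n+1` trees to one with `n+2` trees -/
noncomputable def step : Gad (n + 2) := by
  letI := g.fin
  letI : DecidableEq g.V := Classical.decEq _
  refine
  { V := W g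
    fin := inferInstance
    p := np g
    hgt := nhgt g
    rt := nrt g
    hroot := nhroot g
    hdec := nhdec g
    w := Sum.inl g.w
    card_le := ?_
    deg_le := ?_
    key := ?_ }
  · -- cardinality
    have hc := g.card_le
    have : Fintype.card (W g) = Fintype.card g.V + Fintype.card g.V * Fintype.card g.V := by
      simp [Fintype.card_sum, Fintype.card_prod]
    rw [this]
    show _ ≤ Nn (n + 1) + Nn (n + 1) * Nn (n + 1)
    have := Nat.mul_le_mul hc hc
    omega
  · -- degrees
    intro k v
    have hNpos := Nn_pos (n + 1)
    have hDd : Dd (n + 2) = Nn (n + 1) + Dd (n + 1) := rfl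
    induction k using Fin.lastCases with
    | last =>
      cases v with
      | inl a =>
        refine le_trans (Set.ncard_le_ncard (nbr_last_inl g a) (Set.toFinite _)) ?_
        refine le_trans (Set.ncard_union_le _ _) ?_
        have h1 : ((Sum.inl '' ((pgraph (g.p 0)).neighborSet a)) : Set (W g)).ncard
            = ((pgraph (g.p 0)).neighborSet a).ncard :=
          Set.ncard_image_of_injective _ Sum.inl_injective
        have h2 : (((fun c => Sum.inr (a, c) : g.V → W g)) '' (Set.univ : Set g.V)).ncard
            ≤ Nn (n + 1) := by
          have hinj : Function.Injective (fun c => (Sum.inr (a, c) : W g)) := by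
            intro x y hxy
            simpa using hxy
          rw [Set.ncard_image_of_injective _ hinj, Set.ncard_univ, Nat.card_eq_fintype_card]
          exact g.card_le
        have h3 := g.deg_le 0 a
        omega
      | inr hc =>
        obtain ⟨h, c⟩ := hc
        refine le_trans (Set.ncard_le_ncard (nbr_last_inr g h c) (Set.toFinite _)) ?_
        rw [Set.ncard_singleton]
        omega
    | cast k' =>
      cases v with
      | inl a =>
        refine le_trans (Set.ncard_le_ncard (nbr_cast_inl g k' a) (Set.toFinite _)) ?_
        refine le_trans (Set.ncard_union_le _ _) ?_
        have h1 : ((Sum.inl '' ((pgraph (g.p k')).neighborSet a)) : Set (W g)).ncard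
            = ((pgraph (g.p k')).neighborSet a).ncard :=
          Set.ncard_image_of_injective _ Sum.inl_injective
        have h3 := g.deg_le k' a
        rw [Set.ncard_singleton] at *
        omega
      | inr hc =>
        obtain ⟨h, c⟩ := hc
        refine le_trans (Set.ncard_le_ncard (nbr_cast_inr g k' h c) (Set.toFinite _)) ?_
        refine le_trans (Set.ncard_union_le _ _) ?_
        have hinj : Function.Injective (fun x => (Sum.inr (h, x) : W g)) := by
          intro x y hxy
          simpa using hxy
        have h1 := Set.ncard_image_of_injective ((pgraph (g.p k')).neighborSet c) hinj
        have h3 := g.deg_le k' c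
        rw [Set.ncard_singleton]
        omega
  · -- the key covering property
    intro I hind hcov
    -- every copy is hit by the last color
    have hlastV : ∀ h : g.V, ∃ c, Sum.inr (h, c) ∈ I (Fin.last (n + 1)) := by
      intro h
      by_contra hcon
      push_neg at hcon
      have hJind : ∀ k', IndepIn (pgraph (g.p k'))
          ({c | Sum.inr (h, c) ∈ I k'.castSucc}) := by
        intro k' c hc c' hc' hadj
        exact hind k'.castSucc hc hc' (adj_copy g hadj)
      have hJcov : ∀ v : g.V, v ≠ g.w →
          v ∈ ⋃ k' : Fin (n + 1), {c | Sum.inr (h, c) ∈ I k'.castSucc} := by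
        intro c _
        have hmem := hcov (Sum.inr (h, c)) (by simp)
        rw [Set.mem_iUnion] at hmem
        obtain ⟨k, hk⟩ := hmem
        induction k using Fin.lastCases with
        | last => exact absurd hk (hcon c)
        | cast k' => exact Set.mem_iUnion.2 ⟨k', hk⟩
      have hkey := g.key _ hJind hJcov
      have hmem := hcov (Sum.inr (h, g.w)) (by simp)
      rw [Set.mem_iUnion] at hmem
      obtain ⟨k, hk⟩ := hmem
      induction k using Fin.lastCases with
      | last => exact (hcon g.w) hk
      | cast k' => exact hkey k' hk
    -- hence no hub is in the last color
    have hhub : ∀ h : g.V, Sum.inl h ∉ I (Fin.last (n + 1)) := by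
      intro h hmem
      obtain ⟨c, hc⟩ := hlastV h
      exact hind _ hmem hc (adj_star g h c)
    -- the hub system
    have hJ'ind : ∀ k', IndepIn (pgraph (g.p k')) ({a | Sum.inl a ∈ I k'.castSucc}) := by
      intro k' a ha b hb hadj
      exact hind k'.castSucc ha hb (adj_hub g hadj)
    have hJ'cov : ∀ v : g.V, v ≠ g.w →
        v ∈ ⋃ k' : Fin (n + 1), {a | Sum.inl a ∈ I k'.castSucc} := by
      intro a ha
      have hmem := hcov (Sum.inl a) (by simpa using ha)
      rw [Set.mem_iUnion] at hmem
      obtain ⟨k, hk⟩ := hmem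
      induction k using Fin.lastCases with
      | last => exact absurd hk (hhub a)
      | cast k' => exact Set.mem_iUnion.2 ⟨k', hk⟩
    have hkey' := g.key _ hJ'ind hJ'cov
    intro k
    induction k using Fin.lastCases with
    | last => exact hhub g.w
    | cast k' => exact hkey' k'

end GadStep

/-- gadgets of every positive size -/
noncomputable def gads : (m : ℕ) → Gad (m + 1)
  | 0 => gadOne
  | (m + 1) => GadStep.step (gads m)

lemma NnDd_bounds : ∀ m : ℕ, Nn (m + 1) ≤ 2 ^ (2 ^ (m + 1) - 1) ∧ Dd (m + 1) ≤ 2 ^ (2 ^ m) + 1 := by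
  intro m
  induction m with
  | zero => norm_num [Nn, Dd]
  | succ m ih =>
    obtain ⟨h1, h2⟩ := ih
    have e2 : 1 ≤ 2 ^ (m + 1) := Nat.one_le_two_pow
    constructor
    · show Nn (m + 1) + Nn (m + 1) * Nn (m + 1) ≤ 2 ^ (2 ^ (m + 1 + 1) - 1)
      have hps : 2 ^ (m + 1 + 1) = 2 ^ (m + 1) * 2 := pow_succ 2 (m + 1)
      have e3 : 2 ^ (2 ^ (m + 1 + 1) - 1)
          = 2 * (2 ^ (2 ^ (m + 1) - 1) * 2 ^ (2 ^ (m + 1) - 1)) := by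
        have hexp : 2 ^ (m + 1 + 1) - 1 = 1 + (2 ^ (m + 1) - 1) + (2 ^ (m + 1) - 1) := by
          omega
        rw [hexp, pow_add, pow_add, pow_one]
        ring
      have h4 : Nn (m + 1) * Nn (m + 1) ≤ 2 ^ (2 ^ (m + 1) - 1) * 2 ^ (2 ^ (m + 1) - 1) :=
        Nat.mul_le_mul h1 h1
      have h5 : 2 ^ (2 ^ (m + 1) - 1) ≤ 2 ^ (2 ^ (m + 1) - 1) * 2 ^ (2 ^ (m + 1) - 1) := by
        have := Nat.one_le_two_pow (n := 2 ^ (m + 1) - 1)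
        nlinarith
      omega
    · show Nn (m + 1) + Dd (m + 1) ≤ 2 ^ (2 ^ (m + 1)) + 1
      have h4 : 2 ^ (2 ^ m) ≤ 2 ^ (2 ^ (m + 1) - 1) := by
        refine Nat.pow_le_pow_right (by norm_num) ?_
        have hps : 2 ^ (m + 1) = 2 ^ m * 2 := pow_succ 2 m
        have := Nat.one_le_two_pow (n := m)
        omega
      have h5 : 2 ^ (2 ^ (m + 1) - 1) + 2 ^ (2 ^ (m + 1) - 1) = 2 ^ (2 ^ (m + 1)) := by
        obtain ⟨t, ht⟩ : ∃ t, 2 ^ (m + 1) = t + 1 := ⟨2 ^ (m + 1) - 1, by omega⟩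
        rw [ht]
        simp only [Nat.add_sub_cancel, pow_succ]
        omega
      omega

theorem gad_counterexample {m : ℕ} (g : Gad m) :
    ∃ (n : ℕ) (T : Fin m → SimpleGraph (Fin n)),
      (∀ i, (T i).IsTree) ∧ (∀ i, maxDeg (T i) ≤ Dd m) ∧
      ¬ ∃ I : Fin m → Set (Fin n),
          (∀ j, IndepIn (T j) (I j)) ∧ (⋃ j, I j) = Set.univ := by
  letI := g.fin
  let e : g.V ≃ Fin (Fintype.card g.V) := Fintype.equivFin g.V
  refine ⟨Fintype.card g.V, fun k => pgraph (fun x => e (g.p k (e.symm x))), ?_, ?_, ?_⟩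
  · intro k
    refine pgraph_isTree _ (e (g.rt k)) (fun x => g.hgt k (e.symm x)) ?_ ?_
    · simp [g.hroot k]
    · intro v hv
      have hne : e.symm v ≠ g.rt k := fun hh => hv (by rw [← hh, Equiv.apply_symm_apply])
      simpa using g.hdec k (e.symm v) hne
  · intro k
    unfold maxDeg
    refine Finset.sup_le ?_
    intro x _
    have hsub : (pgraph (fun x => e (g.p k (e.symm x)))).neighborSet x ⊆
        e '' ((pgraph (g.p k)).neighborSet (e.symm x)) := by
      intro u hu
      obtain ⟨hne, hd⟩ := hu
      refine ⟨e.symm u, ⟨?_, ?_⟩, by simp⟩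
      · intro hh
        exact hne (by rw [← Equiv.apply_symm_apply e x, hh, Equiv.apply_symm_apply])
      · rcases hd with h1 | h1
        · left
          have := congrArg e.symm h1
          simpa using this
        · right
          have := congrArg e.symm h1
          simpa using this
    refine le_trans (Set.ncard_le_ncard hsub (Set.toFinite _)) ?_
    rw [Set.ncard_image_of_injective _ e.injective]
    exact g.deg_le k (e.symm x)
  · rintro ⟨I, hind, hcov⟩
    have hJind : ∀ k, IndepIn (pgraph (g.p k)) {x | e x ∈ I k} := by
      intro k u hu v hv hadj
      refine hind k hu hv ?_
      obtain ⟨hne, hd⟩ := hadj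
      refine ⟨fun hh => hne (e.injective hh), ?_⟩
      rcases hd with h1 | h1
      · left; simp [h1]
      · right; simp [h1]
    have hJcov : ∀ v : g.V, v ≠ g.w → v ∈ ⋃ k, {x | e x ∈ I k} := by
      intro v _
      have hm : e v ∈ ⋃ k, I k := by rw [hcov]; trivial
      rw [Set.mem_iUnion] at hm
      obtain ⟨k, hk⟩ := hm
      exact Set.mem_iUnion.2 ⟨k, hk⟩
    have hkey := g.key _ hJind hJcov
    have hm : e g.w ∈ ⋃ k, I k := by rw [hcov]; trivial
    rw [Set.mem_iUnion] at hm
    obtain ⟨k, hk⟩ := hm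
    exact hkey k hk

/-- For every `d ≥ 2` there are `⌈log₂ log₂ d⌉` trees on a common finite vertex
set, each of maximum degree at most `d`, with no cooperative coloring;
consequently `m_T(d) > log₂ log₂ d`. -/
theorem trees_lower_bound (d : ℕ) (hd : 2 ≤ d) :
    (∃ (n : ℕ) (T : Fin ⌈Real.logb 2 (Real.logb 2 d)⌉₊ → SimpleGraph (Fin n)),
      (∀ i, (T i).IsTree) ∧ (∀ i, maxDeg (T i) ≤ d) ∧ ¬ HasCoopColoring T) ∧
    Real.logb 2 (Real.logb 2 d) < (mT d : ℝ) := by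
  set x := Real.logb 2 (Real.logb 2 d) with hx
  set m₀ := ⌈x⌉₊ with hm₀
  have hd1 : (1 : ℝ) < (d : ℝ) := by exact_mod_cast (by omega : 1 < d)
  have hlogd_pos : 0 < Real.logb 2 d := Real.logb_pos (by norm_num) hd1
  have hdeg : ∀ k : ℕ, 1 ≤ k → k ≤ m₀ → Dd k ≤ d := by
    intro k hk1 hkm
    obtain ⟨k', rfl⟩ : ∃ k', k = k' + 1 := ⟨k - 1, by omega⟩
    have hb := (NnDd_bounds k').2
    have hklt : (k' : ℝ) < x := by
      by_contra hcon
      push_neg at hcon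
      have : m₀ ≤ k' := Nat.ceil_le.2 hcon
      omega
    have h2 : (2 : ℝ) ^ ((k' : ℕ) : ℝ) < Real.logb 2 d := by
      rw [hx] at hklt
      exact (Real.lt_logb_iff_rpow_lt (by norm_num) hlogd_pos).1 hklt
    have h3 : (2 : ℝ) ^ ((2 : ℝ) ^ ((k' : ℕ) : ℝ)) < (d : ℝ) :=
      (Real.lt_logb_iff_rpow_lt (by norm_num) (by positivity)).1 h2
    have e1 : (2 : ℝ) ^ ((k' : ℕ) : ℝ) = ((2 ^ k' : ℕ) : ℝ) := by
      rw [Real.rpow_natCast]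
      push_cast
      ring
    have e2 : (2 : ℝ) ^ ((2 : ℝ) ^ ((k' : ℕ) : ℝ)) = ((2 ^ 2 ^ k' : ℕ) : ℝ) := by
      rw [e1, Real.rpow_natCast]
      push_cast
      ring
    rw [e2] at h3
    have h5 : 2 ^ 2 ^ k' < d := by exact_mod_cast h3
    omega
  have hcol : TreesColorable d (13 * d + 3) := by
    intro V _ T htree hdegT
    refine coop_of_many (by omega) (by omega) ?_ T hdegT
    nlinarith
  have hnotcol : ∀ k : ℕ, k ≤ m₀ → ¬ TreesColorable d k := by
    intro k hkm hcol'
    rcases Nat.eq_zero_or_pos k with rfl | hk1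
    · obtain ⟨I, -, hcov⟩ := hcol' (Fin 1) (fun i => i.elim0) (fun i => i.elim0)
        (fun i => i.elim0)
      have h1 : (⋃ j : Fin 0, I j) = ∅ := Set.iUnion_of_empty I
      rw [h1] at hcov
      have := Set.mem_univ (0 : Fin 1)
      rw [← hcov] at this
      exact this
    · obtain ⟨k', rfl⟩ : ∃ k', k = k' + 1 := ⟨k - 1, by omega⟩
      obtain ⟨n, T, htree, hdegT, hno⟩ := gad_counterexample (gads k')
      have hdegd : ∀ i, maxDeg (T i) ≤ d :=
        fun i => (hdegT i).trans (hdeg (k' + 1) (by omega) hkm)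
      exact hno (hcol' (Fin n) T htree hdegd)
  constructor
  · rcases Nat.eq_zero_or_pos m₀ with h0 | hpos
    · haveI hie : IsEmpty (Fin m₀) := by rw [h0]; infer_instance
      refine ⟨1, fun i => (hie.false i).elim, fun i => (hie.false i).elim,
        fun i => (hie.false i).elim, ?_⟩
      rintro ⟨I, -, hcov⟩
      have h1 : (⋃ j : Fin m₀, I j) = ∅ := Set.iUnion_of_empty I
      rw [h1] at hcov
      have := Set.mem_univ (0 : Fin 1)
      rw [← hcov] at this
      exact this
    · obtain ⟨k', hk'⟩ : ∃ k', m₀ = k' + 1 := ⟨m₀ - 1, by omega⟩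
      rw [hk']
      obtain ⟨n, T, htree, hdegT, hno⟩ := gad_counterexample (gads k')
      exact ⟨n, T, htree,
        fun i => (hdegT i).trans (hdeg (k' + 1) (by omega) (by omega)), hno⟩
  · have hSne : {m | TreesColorable d m}.Nonempty := ⟨13 * d + 3, hcol⟩
    have hmem := Nat.sInf_mem hSne
    have hlt : m₀ < mT d := by
      by_contra hcon
      push_neg at hcon
      exact hnotcol (mT d) hcon hmem
    have hxle : x ≤ (m₀ : ℝ) := Nat.le_ceil x
    have hmlt : (m₀ : ℝ) < (mT d : ℝ) := by exact_mod_cast hlt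
    linarith
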